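/- The transversal design TD(q+1, q^{n-1}) obtained by deleting a codimension-2 subspace (and all lines meeting it) from PG(n,q) is resolvable; equivalently, its chromatic index equals q^{n-1}. -/

import Mathlib

open Polynomial
set_option maxHeartbeats 2000000

lemma exists_noneigen (F : Type) [Field F] [Fintype F] (m : ℕ) (hm : 2 ≤ m)
    (U : Type) [AddCommGroup U] [Module F U] [FiniteDimensional F U]
    (hU : Module.finrank F U = m) :
    ∃ g : U →ₗ[F] U, ∀ u : U, u ≠ 0 → ∀ c : F, g u ≠ c • u := by
  classical
  set p := ringChar F with hpdef
  haveI : CharP F p := ringChar.charP F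
  obtain ⟨k, hp, hcard⟩ := FiniteField.card F p
  haveI : Fact p.Prime := ⟨hp⟩
  have hp1 : 1 < p := hp.one_lt
  set e : ℕ := (k : ℕ) * m with hedef
  have he : e ≠ 0 := by positivity
  set gp : F[X] := X ^ p ^ e - X with hgp
  set K := SplittingField gp with hK
  haveI : Finite K := Module.finite_of_finite F
  haveI : Fintype K := Fintype.ofFinite K
  have aux : gp ≠ 0 := FiniteField.X_pow_card_pow_sub_X_ne_zero F he hp1
  have sep : gp.Separable := galois_poly_separable p (p ^ e) (dvd_pow_self p he)
  have key : Fintype.card (gp.rootSet K) = gp.natDegree :=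
    card_rootSet_eq_natDegree sep (SplittingField.splits gp)
  have ndeg : gp.natDegree = p ^ e := FiniteField.X_pow_card_pow_sub_X_natDegree_eq F he hp1
  haveI : CharP K p := charP_of_injective_algebraMap' F p
  haveI : ExpChar K p := ExpChar.prime hp
  have hFfix : ∀ r : F, r ^ p ^ e = r := by
    intro r
    have : p ^ e = Fintype.card F ^ m := by rw [hcard, hedef, pow_mul]
    rw [this, FiniteField.pow_card_pow]
  let φ : K →ₐ[F] K :=
    { iterateFrobenius K p e with
      commutes' := fun r => by
        simp only [RingHom.toMonoidHom_eq_coe, OneHom.toFun_eq_coe, MonoidHom.toOneHom_coe,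
          MonoidHom.coe_coe]
        rw [iterateFrobenius_def, ← map_pow, hFfix] }
  have hfix : ∀ x : K, x ^ p ^ e = x := by
    have hsub : gp.rootSet K ⊆ (AlgHom.equalizer φ (AlgHom.id F K) : Set K) := by
      intro x hx
      rw [mem_rootSet_of_ne aux] at hx
      simp only [hgp, map_sub, aeval_X_pow, aeval_X, sub_eq_zero] at hx
      show φ x = x
      simpa [φ, iterateFrobenius_def] using hx
    have htop : (⊤ : Subalgebra F K) ≤ AlgHom.equalizer φ (AlgHom.id F K) := by
      rw [← SplittingField.adjoin_rootSet gp]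
      exact Algebra.adjoin_le hsub
    intro x
    have := htop (Algebra.mem_top (x := x))
    simpa [φ, iterateFrobenius_def] using this
  have huniv : gp.rootSet K = Set.univ := by
    rw [Set.eq_univ_iff_forall]
    intro x
    rw [mem_rootSet_of_ne aux]
    simp [hgp, hfix x]
  have cardK : Fintype.card K = p ^ e := by
    simp_rw [huniv, ← Fintype.ofEquiv_card (Equiv.Set.univ _)] at key
    convert key.trans ndeg using 2
  have finrankK : Module.finrank F K = m := by
    have h1 : Fintype.card K = Fintype.card F ^ Module.finrank F K := Module.card_eq_pow_finrank
    rw [cardK, hcard, ← pow_mul] at h1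
    have := Nat.pow_right_injective hp.two_le h1
    exact (Nat.eq_of_mul_eq_mul_left k.pos this.symm)
  -- a non-scalar element
  have hnsurj : ¬ Function.Surjective (algebraMap F K) := by
    intro hs
    have hle : Fintype.card K ≤ Fintype.card F := Fintype.card_le_of_surjective _ hs
    rw [cardK, hcard] at hle
    have : (k : ℕ) < e := by
      have h2 : (k : ℕ) * 2 ≤ (k : ℕ) * m := Nat.mul_le_mul_left _ hm
      have := k.pos
      rw [hedef]
      omega
    exact absurd hle (not_le.mpr (Nat.pow_lt_pow_right hp1 this))
  simp only [Function.Surjective, not_forall] at hnsurj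
  obtain ⟨x, hx⟩ := hnsurj
  push_neg at hx
  have h₀ : ∀ u : K, u ≠ 0 → ∀ c : F, x * u ≠ c • u := by
    intro u hu c h
    rw [Algebra.smul_def] at h
    exact hx c (mul_right_cancel₀ hu h).symm
  obtain ⟨eU⟩ := FiniteDimensional.nonempty_linearEquiv_of_finrank_eq
    (hU.trans finrankK.symm)
  refine ⟨eU.symm.toLinearMap ∘ₗ (LinearMap.mulLeft F x) ∘ₗ eU.toLinearMap, ?_⟩
  intro u hu c hgc
  simp only [LinearMap.coe_comp, Function.comp_apply, LinearEquiv.coe_coe,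
    LinearMap.mulLeft_apply] at hgc
  have : x * eU u = c • eU u := by
    have := congrArg eU hgc
    rwa [eU.apply_symm_apply, map_smul] at this
  exact h₀ (eU u) (by simpa using hu) c this

theorem stmt_10 (q n : ℕ) (hn : 3 ≤ n) (F : Type) [Field F] [Fintype F]
    (hq : Fintype.card F = q)
    (U : Submodule F (Fin (n + 1) → F)) (hU : Module.finrank F U = n - 1) :
    sInf {c : ℕ | ∃ f : {W : Submodule F (Fin (n + 1) → F) //
          Module.finrank F W = 2 ∧ W ⊓ U = ⊥} → Fin c,
        ∀ W₁ W₂, W₁ ≠ W₂ → W₁.1 ⊓ W₂.1 ≠ ⊥ → f W₁ ≠ f W₂} = q ^ (n - 1) := by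
  classical
  set V := Fin (n + 1) → F with hV
  have hrV : Module.finrank F V = n + 1 := Module.finrank_fin_fun F
  -- a complement of U
  obtain ⟨W₀, hW₀⟩ := Submodule.exists_isCompl U
  have hW₀2 : Module.finrank F W₀ = 2 := by
    have h := Submodule.finrank_add_eq_of_isCompl hW₀
    rw [hU, hrV] at h
    omega
  set π₀ : V →ₗ[F] W₀ := W₀.linearProjOfIsCompl U hW₀.symm with hπ₀
  set πU : V →ₗ[F] U := U.linearProjOfIsCompl W₀ hW₀ with hπU
  have hid : ∀ v : V, ((πU v : V) + (π₀ v : V)) = v := fun v =>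
    Submodule.projection_add_projection_eq_self hW₀ v
  set j : (W₀ →ₗ[F] U) → (W₀ →ₗ[F] V) := fun φ => W₀.subtype + U.subtype ∘ₗ φ with hj
  have hjapp : ∀ φ w, j φ w = (w : V) + (φ w : V) := fun φ w => rfl
  have hπ₀j : ∀ φ w, π₀ (j φ w) = w := by
    intro φ w
    rw [hjapp, map_add]
    simp [hπ₀, Submodule.linearProjOfIsCompl]
  have hπUj : ∀ φ w, πU (j φ w) = φ w := by
    intro φ w
    rw [hjapp, map_add]
    simp [hπU, Submodule.linearProjOfIsCompl]
  set Γ : (W₀ →ₗ[F] U) → Submodule F V := fun φ => LinearMap.range (j φ) with hΓ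
  have hjinj : ∀ φ, Function.Injective (j φ) := by
    intro φ w w' h
    have := congrArg π₀ h
    rwa [hπ₀j, hπ₀j] at this
  have hΓrank : ∀ φ, Module.finrank F (Γ φ) = 2 := by
    intro φ
    rw [hΓ]
    rw [LinearMap.finrank_range_of_inj (hjinj φ), hW₀2]
  have hΓU : ∀ φ, Γ φ ⊓ U = ⊥ := by
    intro φ
    rw [eq_bot_iff]
    rintro v ⟨hv1, hv2⟩
    obtain ⟨w, rfl⟩ := hv1
    have hw : w = 0 := by
      have h0 : π₀ (j φ w) = 0 := Submodule.projectionOnto_apply_of_mem_right hW₀.symm hv2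
      rwa [hπ₀j] at h0
    rw [hw, map_zero]
    exact Submodule.zero_mem ⊥
  have hΓmem : ∀ φ (v : V), v ∈ Γ φ → v = j φ (π₀ v) := by
    rintro φ v ⟨w, rfl⟩
    rw [hπ₀j]
  have hΓinj : Function.Injective Γ := by
    intro φ ψ h
    apply LinearMap.ext
    intro w
    have h1 : j φ w ∈ Γ ψ := h ▸ LinearMap.mem_range_self _ w
    have h2 := hΓmem ψ _ h1
    rw [hπ₀j] at h2
    have := congrArg πU h2
    rwa [hπUj, hπUj] at this
  have hΓsurj : ∀ W : Submodule F V, Module.finrank F W = 2 → W ⊓ U = ⊥ → ∃ φ, Γ φ = W := by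
    intro W hW2 hWU
    set ρ : W →ₗ[F] W₀ := π₀ ∘ₗ W.subtype with hρ
    have hρinj : Function.Injective ρ := by
      rw [← LinearMap.ker_eq_bot, eq_bot_iff]
      rintro ⟨v, hv⟩ hker
      have h0 : π₀ v = 0 := hker
      have hvU : v ∈ U := by
        exact (Submodule.projectionOnto_apply_eq_zero_iff hW₀.symm).mp h0
      have : v ∈ W ⊓ U := ⟨hv, hvU⟩
      rw [hWU] at this
      simpa using this
    have hρsurj : Function.Surjective ρ :=
      (LinearMap.injective_iff_surjective_of_finrank_eq_finrank
        (by rw [hW2, hW₀2])).mp hρinj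
    set e := LinearEquiv.ofBijective ρ ⟨hρinj, hρsurj⟩ with he
    refine ⟨πU ∘ₗ W.subtype ∘ₗ e.symm.toLinearMap, ?_⟩
    have hkey : ∀ w : W₀, j (πU ∘ₗ W.subtype ∘ₗ e.symm.toLinearMap) w = ((e.symm w : W) : V) := by
      intro w
      rw [hjapp]
      have h1 : ((e.symm w : W) : V) = ((πU (e.symm w : W) : V)) + ((π₀ (e.symm w : W) : V)) :=
        (hid _).symm
      have h2 : π₀ ((e.symm w : W) : V) = w := by
        have := e.apply_symm_apply w
        exact this
      rw [h2] at h1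
      simp only [LinearMap.coe_comp, Function.comp_apply, LinearEquiv.coe_coe,
        Submodule.coe_subtype]
      exact (add_comm _ _).trans h1.symm
    apply le_antisymm
    · rintro v ⟨w, rfl⟩
      rw [hkey]
      exact (e.symm w).2
    · intro v hv
      refine ⟨ρ ⟨v, hv⟩, ?_⟩
      rw [hkey]
      have hev : e ⟨v, hv⟩ = ρ ⟨v, hv⟩ := rfl
      rw [← hev, e.symm_apply_apply]
  -- the bijection with linear maps
  set T := {W : Submodule F V // Module.finrank F W = 2 ∧ W ⊓ U = ⊥} with hT
  set E : (W₀ →ₗ[F] U) → T := fun φ => ⟨Γ φ, hΓrank φ, hΓU φ⟩ with hE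
  have hEbij : Function.Bijective E := by
    constructor
    · intro φ ψ h
      exact hΓinj (congrArg Subtype.val h)
    · rintro ⟨W, hW2, hWU⟩
      obtain ⟨φ, hφ⟩ := hΓsurj W hW2 hWU
      exact ⟨φ, Subtype.ext hφ⟩
  set Eq := Equiv.ofBijective E hEbij with hEq
  -- basis of W₀
  set b := Module.finBasisOfFinrankEq F W₀ hW₀2 with hb
  -- the eigenvector-free map
  haveI : FiniteDimensional F U := inferInstance
  obtain ⟨g, hg⟩ := exists_noneigen F (n - 1) (by omega) U hU
  set color : (W₀ →ₗ[F] U) → U := fun φ => φ (b 0) + g (φ (b 1)) with hcolor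
  have hKEY : ∀ φ ψ, φ ≠ ψ → Γ φ ⊓ Γ ψ ≠ ⊥ → color φ ≠ color ψ := by
    intro φ ψ hne hbot hcol
    obtain ⟨v, hv, hv0⟩ := Submodule.exists_mem_ne_zero_of_ne_bot hbot
    obtain ⟨hvφ, hvψ⟩ := hv
    set w := π₀ v with hw
    have h1 : v = j φ w := hΓmem φ v hvφ
    have h2 : v = j ψ w := hΓmem ψ v hvψ
    have hφψw : φ w = ψ w := by
      have := congrArg πU (h1.symm.trans h2)
      rwa [hπUj, hπUj] at this
    have hwne : w ≠ 0 := by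
      intro h0
      rw [h0, map_zero] at h1
      exact hv0 h1
    set a := φ (b 0) - ψ (b 0) with ha
    set c := φ (b 1) - ψ (b 1) with hc
    have hag : a + g c = 0 := by
      have hcol' : φ (b 0) + g (φ (b 1)) = ψ (b 0) + g (ψ (b 1)) := hcol
      rw [ha, hc, map_sub, sub_add_sub_comm, hcol', sub_self]
    have hrepr := b.sum_repr w
    rw [Fin.sum_univ_two] at hrepr
    set s := b.repr w 0 with hs'
    set t := b.repr w 1 with ht'
    have hsat : s • a + t • c = 0 := by
      have h3 : s • a + t • c = φ (s • b 0 + t • b 1) - ψ (s • b 0 + t • b 1) := by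
        simp only [ha, hc, map_add, map_smul, smul_sub]
        abel
      rw [hrepr] at h3
      rw [h3, hφψw, sub_self]
    by_cases hc0 : c = 0
    · have ha0 : a = 0 := by rwa [hc0, map_zero, add_zero] at hag
      apply hne
      apply b.ext
      intro i
      fin_cases i
      · exact sub_eq_zero.mp ha0
      · exact sub_eq_zero.mp hc0
    · have hgc : g c = -a := eq_neg_of_add_eq_zero_right hag
      by_cases hs : s = 0
      · rw [hs, zero_smul, zero_add] at hsat
        rcases smul_eq_zero.mp hsat with ht | hc'
        · exact hwne (by rw [← hrepr, hs, ht, zero_smul, zero_smul, add_zero])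
        · exact hc0 hc'
      · have h4 : s • g c = t • c := by
          have ha' : a = -g c := by rw [hgc, neg_neg]
          rw [ha', smul_neg] at hsat
          exact neg_add_eq_zero.mp hsat
        have h5 : g c = (s⁻¹ * t) • c := by
          calc g c = s⁻¹ • (s • g c) := by rw [smul_smul, inv_mul_cancel₀ hs, one_smul]
          _ = s⁻¹ • (t • c) := by rw [h4]
          _ = (s⁻¹ * t) • c := by rw [smul_smul]
        exact hg c hc0 (s⁻¹ * t) h5
  -- finite instances and cardinality of U
  haveI : Finite ↥U := Module.finite_of_finite F
  haveI : Fintype ↥U := Fintype.ofFinite _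
  have hcardU : Fintype.card ↥U = q ^ (n - 1) := by
    rw [Module.card_eq_pow_finrank (K := F), hq, hU]
  set eq2 : ↥U ≃ Fin (q ^ (n - 1)) := Fintype.equivFinOfCardEq hcardU with heq2
  have hmem : q ^ (n - 1) ∈ {c : ℕ | ∃ f : T → Fin c,
      ∀ W₁ W₂, W₁ ≠ W₂ → W₁.1 ⊓ W₂.1 ≠ ⊥ → f W₁ ≠ f W₂} := by
    refine ⟨fun W => eq2 (color ((Equiv.ofBijective E hEbij).symm W)), ?_⟩
    intro W₁ W₂ hne hint hfe
    set EE := Equiv.ofBijective E hEbij with hEE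
    have hW1 : W₁.1 = Γ (EE.symm W₁) := (congrArg Subtype.val (EE.apply_symm_apply W₁)).symm
    have hW2 : W₂.1 = Γ (EE.symm W₂) := (congrArg Subtype.val (EE.apply_symm_apply W₂)).symm
    have hφne : EE.symm W₁ ≠ EE.symm W₂ := fun h => hne (by
      rw [← EE.apply_symm_apply W₁, h, EE.apply_symm_apply])
    exact hKEY _ _ hφne (by rw [← hW1, ← hW2]; exact hint) (eq2.injective hfe)
  have hlb : ∀ c ∈ {c : ℕ | ∃ f : T → Fin c,
      ∀ W₁ W₂, W₁ ≠ W₂ → W₁.1 ⊓ W₂.1 ≠ ⊥ → f W₁ ≠ f W₂}, q ^ (n - 1) ≤ c := by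
    rintro c ⟨f, hf⟩
    set φm : ↥U → (↥W₀ →ₗ[F] ↥U) := fun u => (b.coord 0).smulRight u with hφm
    have hφu0 : ∀ u, φm u (b 0) = u := by
      intro u
      simp only [hφm, LinearMap.smulRight_apply, Module.Basis.coord_apply, Module.Basis.repr_self_apply]
      simp
    have hφu1 : ∀ u, φm u (b 1) = 0 := by
      intro u
      simp only [hφm, LinearMap.smulRight_apply, Module.Basis.coord_apply, Module.Basis.repr_self_apply]
      simp
    have hinj : Function.Injective (fun u => f (E (φm u))) := by
      intro u u' heq
      by_contra hne'
      have h1 : E (φm u) ≠ E (φm u') := by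
        intro h
        have hφeq : φm u = φm u' := hEbij.1 h
        exact hne' (by rw [← hφu0 u, ← hφu0 u', hφeq])
      have hb1mem : ((b 1 : ↥W₀) : V) ∈ (E (φm u)).1 ⊓ (E (φm u')).1 := by
        constructor
        · exact ⟨b 1, by rw [hjapp, hφu1]; simp⟩
        · exact ⟨b 1, by rw [hjapp, hφu1]; simp⟩
      have h2 : (E (φm u)).1 ⊓ (E (φm u')).1 ≠ ⊥ := by
        intro hbot
        rw [hbot, Submodule.mem_bot] at hb1mem
        exact b.ne_zero 1 (Submodule.coe_eq_zero.mp hb1mem)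
      exact hf _ _ h1 h2 heq
    calc q ^ (n - 1) = Fintype.card ↥U := hcardU.symm
      _ ≤ Fintype.card (Fin c) := Fintype.card_le_of_injective _ hinj
      _ = c := Fintype.card_fin c
  exact le_antisymm (Nat.sInf_le hmem) (le_csInf ⟨_, hmem⟩ hlb)
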